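/- (Sakai, Closed Embedding Theorem) Every submetrizable k_ω-space is homeomorphic to a closed subspace of Q^∞. -/

import Mathlib

open Set Topology TopologicalSpace

universe u v

/-- A `k_ω`-sequence for `X`. -/
def IsKOmegaSeq (X : Type v) [TopologicalSpace X] (C : ℕ → Set X) : Prop :=
  (∀ n, IsCompact (C n)) ∧ Monotone C ∧ (⋃ n, C n) = Set.univ ∧
    ∀ U : Set X, IsOpen U ↔ ∀ n, IsOpen ((Subtype.val ⁻¹' U : Set (C n)))

/-- A `k_ω`-space: a Hausdorff space which is the direct limit of a `k_ω`-sequence. -/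
def IsKOmega (X : Type v) [TopologicalSpace X] : Prop :=
  T2Space X ∧ ∃ C : ℕ → Set X, IsKOmegaSeq X C

/-- A space is submetrizable if its topology is finer than some metrizable topology. -/
def Submetrizable (X : Type v) [t : TopologicalSpace X] : Prop :=
  ∃ m : TopologicalSpace X, t ≤ m ∧ @MetrizableSpace X m

/-- `X` is an absolute neighborhood extensor for the class of spaces satisfying `P`. -/
def IsANEFor (X : Type u) [TopologicalSpace X]
    (P : (A : Type v) → TopologicalSpace A → Prop) : Prop :=
  ∀ (A : Type v) [tA : TopologicalSpace A], P A tA → ∀ B : Set A, IsClosed B →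
    ∀ f : B → X, Continuous f → ∃ N : Set A, IsOpen N ∧ B ⊆ N ∧
      ∃ g : N → X, Continuous g ∧ ∀ (a : A) (hB : a ∈ B) (hN : a ∈ N), g ⟨a, hN⟩ = f ⟨a, hB⟩

/-- `X` is an `ANR(k_ω)`-space: whenever `X` is embedded as a closed subspace of a
`k_ω`-space, it is a retract of a neighborhood. -/
def IsANRkw (X : Type u) [TopologicalSpace X] : Prop :=
  IsKOmega X ∧ ∀ (Y : Type v) [TopologicalSpace Y], IsKOmega Y →
    ∀ e : X → Y, IsClosedEmbedding e →
      ∃ N : Set Y, (∀ y ∈ Set.range e, N ∈ nhds y) ∧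
        ∃ r : N → Y, Continuous r ∧ (∀ z : N, r z ∈ Set.range e) ∧
          ∀ z : N, (z : Y) ∈ Set.range e → r z = (z : Y)

/-- The set of bounded real sequences. -/
def QInfSet : Set (ℕ → ℝ) := {x | ∃ M : ℝ, ∀ i, |x i| ≤ M}

/-- The cube `[-n,n]^ω`, carrying the (compact) subspace topology of the product `ℝ^ω`. -/
def QCube (n : ℕ) : Set (ℕ → ℝ) := {x | ∀ i, |x i| ≤ (n : ℝ)}

/-- The underlying set of `Q^∞`: all bounded real sequences. -/
def QInf : Type := QInfSet

/-- The inclusion of the cube `[-n,n]^ω` into `Q^∞`. -/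
def QInf.incl (n : ℕ) (x : QCube n) : QInf := ⟨x.1, ⟨(n : ℝ), x.2⟩⟩

/-- The direct limit topology on `Q^∞`: a set is open iff its intersection with each cube
`[-n,n]^ω` is open in that cube. -/
instance QInf.topologicalSpace : TopologicalSpace QInf :=
  ⨆ n : ℕ, TopologicalSpace.coinduced (QInf.incl n) inferInstance

/-- Auxiliary coordinate family for the Sakai embedding. -/
noncomputable def sakaiG (Y : Type u) [MetricSpace Y] (D : ℕ → Set Y) (u : ℕ → Y) (x : Y) :
    ℕ ⊕ ℕ × ℕ → ℝ
  | Sum.inl k => min 1 (dist x (u k))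
  | Sum.inr (n, j) => ((n : ℝ) + 1) * min 1 ((j : ℝ) * Metric.infDist x (D n))

/-- The Sakai embedding map into sequences, reindexed by `ℕ`. -/
noncomputable def sakaiF (Y : Type u) [MetricSpace Y] (D : ℕ → Set Y) (u : ℕ → Y)
    (x : Y) (i : ℕ) : ℝ :=
  sakaiG Y D u x ((Denumerable.eqv (ℕ ⊕ ℕ × ℕ)).symm i)

section SakaiLemmas

variable {Y : Type u} [MetricSpace Y] (D : ℕ → Set Y) (u : ℕ → Y)

lemma sakaiG_nonneg (x : Y) (s : ℕ ⊕ ℕ × ℕ) : 0 ≤ sakaiG Y D u x s := by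
  rcases s with k | ⟨n, j⟩
  · exact le_min zero_le_one dist_nonneg
  · refine mul_nonneg (by positivity) (le_min zero_le_one ?_)
    exact mul_nonneg (by positivity) Metric.infDist_nonneg

lemma sakaiF_bound (hD : Monotone D) {x : Y} {k : ℕ} (hx : x ∈ D k) (i : ℕ) :
    |sakaiF Y D u x i| ≤ (k : ℝ) + 1 := by
  rw [sakaiF, abs_of_nonneg (sakaiG_nonneg D u x _)]
  rcases h : (Denumerable.eqv (ℕ ⊕ ℕ × ℕ)).symm i with k' | ⟨n, j⟩
  · calc min 1 (dist x (u k')) ≤ 1 := min_le_left _ _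
      _ ≤ (k : ℝ) + 1 := by nlinarith [Nat.cast_nonneg (α := ℝ) k]
  · rcases le_or_gt k n with hkn | hnk
    · have : x ∈ D n := hD hkn hx
      simp only [sakaiG, Metric.infDist_zero_of_mem this, mul_zero, min_eq_right (le_refl (0:ℝ))]
      simp
      positivity
    · have h1 : min 1 ((j : ℝ) * Metric.infDist x (D n)) ≤ 1 := min_le_left _ _
      have h2 : (0:ℝ) ≤ min 1 ((j : ℝ) * Metric.infDist x (D n)) :=
        le_min zero_le_one (mul_nonneg (by positivity) Metric.infDist_nonneg)
      calc ((n : ℝ) + 1) * min 1 ((j : ℝ) * Metric.infDist x (D n))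
          ≤ ((n : ℝ) + 1) * 1 := by nlinarith
        _ ≤ (k : ℝ) + 1 := by
            have : (n : ℝ) ≤ (k : ℝ) := by exact_mod_cast hnk.le
            linarith

lemma sakaiF_escape {n : ℕ} (hcomp : IsCompact (D n)) (hne : (D n).Nonempty)
    {x : Y} (hx : x ∉ D n) : ∃ i : ℕ, sakaiF Y D u x i = (n : ℝ) + 1 := by
  have hpos : 0 < Metric.infDist x (D n) :=
    (hcomp.isClosed.notMem_iff_infDist_pos hne).1 hx
  obtain ⟨j, hj⟩ := exists_nat_ge (1 / Metric.infDist x (D n))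
  refine ⟨(Denumerable.eqv (ℕ ⊕ ℕ × ℕ)) (Sum.inr (n, j)), ?_⟩
  rw [sakaiF, Equiv.symm_apply_apply]
  have h1 : (1:ℝ) ≤ (j : ℝ) * Metric.infDist x (D n) := by
    rw [div_le_iff₀ hpos] at hj; linarith
  simp [sakaiG, min_eq_left h1]

lemma sakaiF_injective (hu : ∀ x : Y, ∀ ε : ℝ, 0 < ε → ∃ k, dist x (u k) < ε)
    {x y : Y} (h : ∀ i, sakaiF Y D u x i = sakaiF Y D u y i) : x = y := by
  by_contra hxy
  have hd : 0 < dist x y := dist_pos.mpr hxy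
  obtain ⟨k, hk⟩ := hu x (min (dist x y) 2 / 2) (by positivity)
  have hmin2 : min (dist x y) 2 ≤ 2 := min_le_right _ _
  have h1 : dist x (u k) < 1 := by linarith
  have hco := h ((Denumerable.eqv (ℕ ⊕ ℕ × ℕ)) (Sum.inl k))
  rw [sakaiF, sakaiF, Equiv.symm_apply_apply] at hco
  simp only [sakaiG] at hco
  rw [min_eq_right h1.le] at hco
  have h2 : dist y (u k) < 1 := by
    by_contra h2
    push_neg at h2
    rw [min_eq_left h2] at hco
    linarith
  rw [min_eq_right h2.le] at hco
  have := dist_triangle x (u k) y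
  rw [dist_comm (u k) y, ← hco] at this
  have hmin1 : min (dist x y) 2 ≤ dist x y := min_le_left _ _
  linarith

lemma sakaiG_continuous (s : ℕ ⊕ ℕ × ℕ) : Continuous fun x => sakaiG Y D u x s := by
  rcases s with k | ⟨n, j⟩
  · exact continuous_const.min (continuous_id.dist continuous_const)
  · exact continuous_const.mul
      (continuous_const.min (continuous_const.mul (Metric.continuous_infDist_pt (D n))))

lemma sakaiF_continuous (i : ℕ) : Continuous fun x => sakaiF Y D u x i :=
  sakaiG_continuous D u _

lemma sakai_dense_seq [Nonempty Y] (K : ℕ → Set Y) (hK : ∀ n, IsCompact (K n))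
    (hcov : (⋃ n, K n) = Set.univ) :
    ∃ u : ℕ → Y, ∀ x : Y, ∀ ε : ℝ, 0 < ε → ∃ k, dist x (u k) < ε := by
  have : SeparableSpace Y := by
    rw [← isSeparable_univ_iff, ← hcov]
    exact IsSeparable.iUnion fun n => (hK n).isSeparable
  obtain ⟨u, hu⟩ := TopologicalSpace.exists_dense_seq Y
  exact ⟨u, fun x ε hε => Metric.denseRange_iff.mp hu x ε hε⟩

end SakaiLemmas

lemma qinf_isOpen_iff {U : Set QInf} : IsOpen U ↔ ∀ n, IsOpen (QInf.incl n ⁻¹' U) :=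
  isOpen_iSup_iff.trans (forall_congr' fun _ => isOpen_coinduced)

lemma qinf_isClosed_iff {S : Set QInf} : IsClosed S ↔ ∀ n, IsClosed (QInf.incl n ⁻¹' S) := by
  simp only [← isOpen_compl_iff, qinf_isOpen_iff (U := Sᶜ), Set.preimage_compl]

lemma qinf_continuous_incl (n : ℕ) : Continuous (QInf.incl n) :=
  continuous_iSup_rng continuous_coinduced_rng

/-- A `Q^∞`-manifold: a Lindelöf space in which every point has a neighborhood
homeomorphic to an open subset of `Q^∞`. -/
def IsQInfManifold (M : Type u) [TopologicalSpace M] : Prop :=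
  LindelofSpace M ∧ ∀ x : M, ∃ N : Set M, N ∈ nhds x ∧
    ∃ V : Set QInf, IsOpen V ∧ Nonempty (↥N ≃ₜ ↥V)

/-- Sakai's Closed Embedding Theorem: every submetrizable `k_ω`-space embeds as a closed
subspace of `Q^∞`. -/
theorem closed_embedding_into_QInf
    (X : Type u) [TopologicalSpace X] (hXk : IsKOmega X) (hXs : Submetrizable X) :
    ∃ e : X → QInf, IsClosedEmbedding e := by
  obtain ⟨hT2, C, hCcomp, hCmono, hCcover, hCopen⟩ := hXk
  obtain ⟨m, hle, hm⟩ := hXs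
  obtain ⟨M, hMm⟩ : ∃ M : MetricSpace X, M.toUniformSpace.toTopologicalSpace = m :=
    ⟨@TopologicalSpace.metrizableSpaceMetric X m hm, rfl⟩
  subst hMm
  rcases isEmpty_or_nonempty X with hE | hNE
  · refine ⟨fun x => isEmptyElim x, ?_⟩
    refine IsClosedEmbedding.of_continuous_injective_isClosedMap ?_ (fun a => isEmptyElim a) ?_
    · refine continuous_def.mpr fun U _ => ?_
      rw [Set.eq_empty_of_isEmpty ((fun x : X => (isEmptyElim x : QInf)) ⁻¹' U)]
      exact isOpen_empty
    · intro A hA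
      rw [Set.eq_empty_of_isEmpty A, Set.image_empty]
      exact isClosed_empty
  · obtain ⟨x₀⟩ := hNE
    have hid : Continuous[_, M.toUniformSpace.toTopologicalSpace] (id : X → X) :=
      continuous_id_iff_le.mpr hle
    set D : ℕ → Set X := fun n => C n ∪ {x₀} with hDdef
    have hDcomp : ∀ n, IsCompact (D n) := fun n => (hCcomp n).union isCompact_singleton
    have hDmono : Monotone D := fun a b hab => Set.union_subset_union_left _ (hCmono hab)
    have hDcover : (⋃ n, D n) = Set.univ := by
      apply Set.eq_univ_of_univ_subset
      rw [← hCcover]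
      exact Set.iUnion_mono fun n => Set.subset_union_left
    have hDne : ∀ n, (D n).Nonempty := fun n => ⟨x₀, Or.inr rfl⟩
    have hkey : ∀ φ : X → ℝ, @Continuous X ℝ M.toUniformSpace.toTopologicalSpace _ φ →
        Continuous φ := fun φ h =>
      continuous_def.mpr fun U hU =>
        @Continuous.isOpen_preimage X X _ M.toUniformSpace.toTopologicalSpace id hid (φ ⁻¹' U)
          (@Continuous.isOpen_preimage X ℝ M.toUniformSpace.toTopologicalSpace _ φ h U hU)
    have hDcompM : ∀ n, @IsCompact X M.toUniformSpace.toTopologicalSpace (D n) := fun n => by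
      have h1 : @IsCompact X M.toUniformSpace.toTopologicalSpace (id '' (D n)) :=
        @IsCompact.image X X _ M.toUniformSpace.toTopologicalSpace (D n) id (hDcomp n) hid
      rwa [Set.image_id] at h1
    obtain ⟨u, hu⟩ := @sakai_dense_seq X M ⟨x₀⟩ D hDcompM hDcover
    set f₀ : X → ℕ → ℝ := @sakaiF X M D u with hf₀def
    have hcoord : ∀ i, Continuous fun x => f₀ x i := fun i =>
      hkey _ (@sakaiF_continuous X M D u i)
    have hf₀ : Continuous f₀ := continuous_pi hcoord
    have hbound : ∀ (k : ℕ) (x : X), x ∈ D k → f₀ x ∈ QCube (k + 1) := by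
      intro k x hx
      have hb := @sakaiF_bound X M D u hDmono x k hx
      simp only [QCube, Set.mem_setOf_eq]
      intro i
      push_cast
      exact hb i
    have hQmem : ∀ x, f₀ x ∈ QInfSet := by
      intro x
      have hxU : x ∈ ⋃ n, D n := hDcover ▸ Set.mem_univ x
      obtain ⟨k, hk⟩ := Set.mem_iUnion.mp hxU
      exact ⟨(k : ℝ) + 1, @sakaiF_bound X M D u hDmono x k hk⟩
    set f : X → QInf := fun x => ⟨f₀ x, hQmem x⟩ with hfdef
    have hcont : Continuous f := by
      rw [continuous_def]
      intro V hV
      rw [hCopen]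
      intro n
      have hsub : ∀ y : C n, f₀ y.1 ∈ QCube (n + 1) := fun y => hbound n y.1 (Or.inl y.2)
      have hg : Continuous fun y : C n => QInf.incl (n + 1) ⟨f₀ y.1, hsub y⟩ :=
        (qinf_continuous_incl (n + 1)).comp
          (Continuous.subtype_mk (hf₀.comp continuous_subtype_val) _)
      exact hg.isOpen_preimage V hV
    have hinj : Function.Injective f := by
      intro x y hxy
      have hv : f₀ x = f₀ y := congrArg (fun q : QInf => q.1) hxy
      exact @sakaiF_injective X M D u hu x y fun i => congrFun hv i
    have hclosed : IsClosedMap f := by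
      intro A hA
      rw [qinf_isClosed_iff]
      intro k
      have himg : IsClosed (f₀ '' (A ∩ D k)) := (((hDcomp k).inter_left hA).image hf₀).isClosed
      have hset : QInf.incl k ⁻¹' (f '' A)
          = (fun z : QCube k => (z : ℕ → ℝ)) ⁻¹' (f₀ '' (A ∩ D k)) := by
        ext z
        simp only [Set.mem_preimage, Set.mem_image]
        constructor
        · rintro ⟨a, haA, hfa⟩
          have hz1 : (z : ℕ → ℝ) = f₀ a := congrArg (fun q : QInf => q.1) hfa.symm
          refine ⟨a, ⟨haA, ?_⟩, hz1.symm⟩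
          by_contra hak
          obtain ⟨i, hi⟩ := @sakaiF_escape X M D u k (hDcompM k) (hDne k) a hak
          have hzc := z.2
          simp only [QCube, Set.mem_setOf_eq] at hzc
          have hzi := hzc i
          have hi' : f₀ a i = (k : ℝ) + 1 := hi
          rw [hz1, hi', abs_of_nonneg (by positivity : (0:ℝ) ≤ (k : ℝ) + 1)] at hzi
          linarith
        · rintro ⟨a, ⟨haA, haD⟩, hfa⟩
          exact ⟨a, haA, Subtype.ext hfa⟩
      rw [hset]
      exact himg.preimage continuous_subtype_val
    exact ⟨f, IsClosedEmbedding.of_continuous_injective_isClosedMap hcont hinj hclosed⟩
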